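/- Let f : [0,1] × ℝ^{2n} → ℝ^{2n} be a smooth family of maps such that f₀ = id and, for each t, f_t := f(t,·) is a symplectomorphism of ℝ^{2n} (a C¹ diffeomorphism with everywhere symplectic Jacobian); assume (t,z) ↦ f_t(z) and its time derivative ḟ_t(z) := ∂_t f(t,z) are continuously differentiable. Define H(z,t) = −∫₀¹ z · [J (ḟ_t ∘ f_t^{−1})(λz)] dλ. Then (f_t) is the Hamiltonian flow of H: for every z₀ ∈ ℝ^{2n} and t ∈ [0,1], ∂_t f_t(z₀) = J ∇_z H(f_t(z₀), t). -/

import Mathlib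

open Matrix
open scoped RealInnerProductSpace

noncomputable section

/-- The standard symplectic matrix `J = [[0, I], [−I, 0]]`. -/
def Jmat (n : ℕ) : Matrix (Fin n ⊕ Fin n) (Fin n ⊕ Fin n) ℝ :=
  Matrix.fromBlocks 0 1 (-1) 0

/-- Phase space `ℝ²ⁿ` as a euclidean space. -/
abbrev EE (n : ℕ) : Type := EuclideanSpace ℝ (Fin n ⊕ Fin n)

def toEE (n : ℕ) (v : Fin n ⊕ Fin n → ℝ) : EE n := WithLp.toLp 2 v
def fromEE (n : ℕ) (v : EE n) : Fin n ⊕ Fin n → ℝ := v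

/-! ### Auxiliary lemmas -/

lemma JJ' (n : ℕ) : Jmat n * Jmat n = -1 := by
  simp [Jmat, Matrix.fromBlocks_multiply, ← Matrix.fromBlocks_one, Matrix.fromBlocks_neg]

lemma Jtrans' (n : ℕ) : (Jmat n)ᵀ = -(Jmat n) := by
  simp [Jmat, Matrix.fromBlocks_transpose, Matrix.fromBlocks_neg]

lemma inner_eq_dot' (n : ℕ) (a b : EE n) : ⟪a, b⟫ = fromEE n a ⬝ᵥ fromEE n b := by
  simp [PiLp.inner_apply, dotProduct, fromEE, RCLike.inner_apply, mul_comm]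

def JL (n : ℕ) : EE n →L[ℝ] EE n := (Matrix.toEuclideanLin (Jmat n)).toContinuousLinearMap

lemma JL_apply' (n : ℕ) (v : EE n) : JL n v = toEE n (Jmat n *ᵥ fromEE n v) := rfl

lemma fromEE_JL (n : ℕ) (v : EE n) : fromEE n (JL n v) = Jmat n *ᵥ fromEE n v := rfl

lemma JLJL' (n : ℕ) (v : EE n) : JL n (JL n v) = -v := by
  show toEE n (Jmat n *ᵥ (Jmat n *ᵥ fromEE n v)) = -v
  rw [Matrix.mulVec_mulVec, JJ', Matrix.neg_mulVec, Matrix.one_mulVec]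
  rfl

lemma Janti' (n : ℕ) (a b : EE n) : ⟪JL n a, b⟫ = -⟪a, JL n b⟫ := by
  rw [inner_eq_dot', inner_eq_dot', JL_apply', JL_apply']
  show (Jmat n *ᵥ fromEE n a) ⬝ᵥ fromEE n b = -(fromEE n a ⬝ᵥ (Jmat n *ᵥ fromEE n b))
  rw [Matrix.dotProduct_mulVec, ← Matrix.vecMul_transpose, Jtrans', Matrix.vecMul_neg,
    neg_dotProduct]

lemma symp_const' (n : ℕ) (M : Matrix (Fin n ⊕ Fin n) (Fin n ⊕ Fin n) ℝ)
    (h : Mᵀ * Jmat n * M = Jmat n) (a b : EE n) :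
    ⟪(Matrix.toEuclideanLin M).toContinuousLinearMap a,
      JL n ((Matrix.toEuclideanLin M).toContinuousLinearMap b)⟫ = ⟪a, JL n b⟫ := by
  rw [inner_eq_dot', inner_eq_dot']
  show (M *ᵥ fromEE n a) ⬝ᵥ (Jmat n *ᵥ (M *ᵥ fromEE n b))
      = fromEE n a ⬝ᵥ (Jmat n *ᵥ fromEE n b)
  rw [Matrix.dotProduct_mulVec, ← Matrix.vecMul_transpose, Matrix.vecMul_vecMul,
    Matrix.dotProduct_mulVec, Matrix.vecMul_vecMul, h, ← Matrix.dotProduct_mulVec]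

def Bmap (n : ℕ) (f' : ℝ → EE n → EE n) (r : ℝ) (z : EE n) : EE n →L[ℝ] EE n :=
  (fderiv ℝ (fun p : ℝ × EE n => f' p.1 p.2) (r, z)).comp (ContinuousLinearMap.inr ℝ ℝ (EE n))

lemma Bmap_hasFDerivAt {n : ℕ} {f' : ℝ → EE n → EE n}
    (hf'C : ContDiff ℝ 1 fun p : ℝ × EE n => f' p.1 p.2) (r : ℝ) (z : EE n) :
    HasFDerivAt (f' r) (Bmap n f' r z) z :=
  ((hf'C.differentiable one_ne_zero (r, z)).hasFDerivAt).comp z (hasFDerivAt_prodMk_right r z)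

lemma Bmap_continuous {n : ℕ} {f' : ℝ → EE n → EE n}
    (hf'C : ContDiff ℝ 1 fun p : ℝ × EE n => f' p.1 p.2) :
    Continuous fun p : ℝ × EE n => Bmap n f' p.1 p.2 :=
  (hf'C.continuous_fderiv one_ne_zero).clm_comp continuous_const

lemma mixed_partial {n : ℕ} {f f' : ℝ → EE n → EE n}
    (hf'C : ContDiff ℝ 1 fun p : ℝ × EE n => f' p.1 p.2)
    (hf' : ∀ t z, HasDerivAt (fun s => f s z) (f' t z) t)
    (ζ : EE n) (A : ℝ → EE n →L[ℝ] EE n)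
    (hA : ∀ s, HasFDerivAt (f s) (A s) ζ) (t : ℝ) (b : EE n) :
    HasDerivAt (fun s => A s b) (Bmap n f' t ζ b) t := by
  have hf'cont : Continuous fun p : ℝ × EE n => f' p.1 p.2 := hf'C.continuous
  have hcont1 : ∀ z : EE n, Continuous fun r => f' r z := fun z =>
    hf'cont.comp (continuous_id.prodMk continuous_const)
  have hBcont : Continuous fun p : ℝ × EE n => Bmap n f' p.1 p.2 := Bmap_continuous hf'C
  have hBcontr : ∀ z : EE n, Continuous fun r => Bmap n f' r z := fun z =>
    hBcont.comp (continuous_id.prodMk continuous_const)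
  have step1 : ∀ s z, f s z = f 0 z + ∫ r in (0:ℝ)..s, f' r z := by
    intro s z
    have := intervalIntegral.integral_eq_sub_of_hasDerivAt
      (f := fun r => f r z) (f' := fun r => f' r z)
      (fun r _ => hf' r z) ((hcont1 z).intervalIntegrable 0 s)
    rw [this]; abel
  have step3 : ∀ s, HasFDerivAt (fun z => ∫ r in (0:ℝ)..s, f' r z)
      (∫ r in (0:ℝ)..s, Bmap n f' r ζ) ζ := by
    intro s
    obtain ⟨C, hC⟩ : ∃ C, ∀ p ∈ (Set.uIcc 0 s) ×ˢ Metric.closedBall ζ 1,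
        ‖Bmap n f' p.1 p.2‖ ≤ C :=
      (isCompact_uIcc.prod (isCompact_closedBall ζ 1)).exists_bound_of_continuousOn
        hBcont.continuousOn
    refine intervalIntegral.hasFDerivAt_integral_of_dominated_of_fderiv_le
      (𝕜 := ℝ) (μ := MeasureTheory.volume) (F := fun z r => f' r z)
      (F' := fun z r => Bmap n f' r z) (bound := fun _ => C) (s := Metric.ball ζ 1) (Metric.ball_mem_nhds ζ one_pos) ?_ ?_ ?_ ?_ ?_ ?_
    · exact Filter.Eventually.of_forall fun z => (hcont1 z).aestronglyMeasurable
    · exact (hcont1 ζ).intervalIntegrable 0 s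
    · exact (hBcontr ζ).aestronglyMeasurable
    · refine Filter.Eventually.of_forall fun r hr z hz => hC (r, z) ?_
      exact ⟨Set.uIoc_subset_uIcc hr, Metric.ball_subset_closedBall hz⟩
    · exact intervalIntegrable_const
    · exact Filter.Eventually.of_forall fun r _ z _ => Bmap_hasFDerivAt hf'C r z
  have step4 : ∀ s, A s = A 0 + ∫ r in (0:ℝ)..s, Bmap n f' r ζ := by
    intro s
    have h1 : HasFDerivAt (fun z => f 0 z + ∫ r in (0:ℝ)..s, f' r z)
        (A 0 + ∫ r in (0:ℝ)..s, Bmap n f' r ζ) ζ := (hA 0).add (step3 s)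
    have h2 : (fun z => f 0 z + ∫ r in (0:ℝ)..s, f' r z) = f s := by
      funext z; rw [← step1 s z]
    rw [h2] at h1
    exact (hA s).unique h1
  have step5 : (fun s => A s b) = fun s => A 0 b + ∫ r in (0:ℝ)..s, Bmap n f' r ζ b := by
    funext s
    rw [step4 s]
    simp only [ContinuousLinearMap.add_apply]
    congr 1
    exact ContinuousLinearMap.intervalIntegral_apply ((hBcontr ζ).intervalIntegrable 0 s) b
  rw [step5]
  have hcb : Continuous fun r => Bmap n f' r ζ b := (hBcontr ζ).clm_apply continuous_const
  have : HasDerivAt (fun s => ∫ r in (0:ℝ)..s, Bmap n f' r ζ b) (Bmap n f' t ζ b) t :=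
    intervalIntegral.integral_hasDerivAt_right (hcb.intervalIntegrable 0 t)
      (hcb.stronglyMeasurableAtFilter _ _) hcb.continuousAt
  exact this.const_add (A 0 b)

set_option maxHeartbeats 1000000

/-- Banyaga–Wang: a smooth isotopy `(f_t)` of symplectomorphisms of
`ℝ²ⁿ` with `f₀ = id` is the Hamiltonian flow of
`H(z,t) = −∫₀¹ z · [J (ḟ_t ∘ f_t⁻¹)(λz)] dλ`. -/
theorem stmt15 (n : ℕ) (f f' : ℝ → EE n → EE n)
    (hfC : ContDiff ℝ 1 fun p : ℝ × EE n => f p.1 p.2)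
    (hf'C : ContDiff ℝ 1 fun p : ℝ × EE n => f' p.1 p.2)
    (hf0 : ∀ z, f 0 z = z)
    (hf' : ∀ t z, HasDerivAt (fun s => f s z) (f' t z) t)
    (finv : ℝ → EE n → EE n)
    (hinv₁ : ∀ t, Function.LeftInverse (finv t) (f t))
    (hinv₂ : ∀ t, Function.RightInverse (finv t) (f t))
    (hfinvC : ∀ t, ContDiff ℝ 1 (finv t))
    (Df : ℝ → EE n → Matrix (Fin n ⊕ Fin n) (Fin n ⊕ Fin n) ℝ)
    (hDf : ∀ t z, HasFDerivAt (f t)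
      ((Matrix.toEuclideanLin (Df t z)).toContinuousLinearMap) z)
    (hDfsymp : ∀ t z, (Df t z)ᵀ * Jmat n * Df t z = Jmat n)
    (H : EE n → ℝ → ℝ)
    (hH : ∀ z t, H z t =
      -∫ u in (0:ℝ)..1, fromEE n z ⬝ᵥ (Jmat n *ᵥ fromEE n (f' t (finv t (u • z)))))
    (z₀ : EE n) (t : ℝ) (ht : t ∈ Set.Icc (0:ℝ) 1) :
    HasDerivAt (fun s => f s z₀)
      (toEE n (Jmat n *ᵥ fromEE n (gradient (fun z => H z t) (f t z₀)))) t := by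
  classical
  -- the time-dependent vector field
  have hf'tC : ContDiff ℝ 1 (f' t) := by
    have : (f' t) = (fun p : ℝ × EE n => f' p.1 p.2) ∘ fun z => (t, z) := rfl
    rw [this]; exact hf'C.comp (contDiff_const.prodMk contDiff_id)
  have hXC : ContDiff ℝ 1 (fun z => f' t (finv t z)) := hf'tC.comp (hfinvC t)
  set X : EE n → EE n := fun z => f' t (finv t z) with hXdef
  have hXd : Differentiable ℝ X := hXC.differentiable one_ne_zero
  have hXf : ∀ z, X (f t z) = f' t z := fun z => by rw [hXdef]; simp [hinv₁ t z]
  -- symmetry of J ∘ DX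
  have hsym : ∀ z (v₁ v₂ : EE n),
      ⟪v₁, JL n (fderiv ℝ X z v₂)⟫ = ⟪v₂, JL n (fderiv ℝ X z v₁)⟫ := by
    intro z v₁ v₂
    set ζ := finv t z with hζ
    have hfζ : f t ζ = z := hinv₂ t z
    set A : ℝ → EE n →L[ℝ] EE n :=
      fun s => (Matrix.toEuclideanLin (Df s ζ)).toContinuousLinearMap with hAdef
    have hAs : ∀ s, HasFDerivAt (f s) (A s) ζ := fun s => hDf s ζ
    set B : EE n →L[ℝ] EE n := Bmap n f' t ζ with hBdef
    have hmix : ∀ b, HasDerivAt (fun s => A s b) (B b) t :=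
      fun b => mixed_partial hf'C hf' ζ A hAs t b
    have hKd : DifferentiableAt ℝ (finv t) z := ((hfinvC t).differentiable one_ne_zero) z
    set K : EE n →L[ℝ] EE n := fderiv ℝ (finv t) z with hKdef
    have hAK : ∀ v, A t (K v) = v := by
      intro v
      have h1 : HasFDerivAt (f t ∘ finv t) ((A t).comp K) z := by
        refine HasFDerivAt.comp z ?_ hKd.hasFDerivAt
        rw [← hζ]; exact hAs t
      have h2 : f t ∘ finv t = id := funext (hinv₂ t)
      rw [h2] at h1
      have h3 : (A t).comp K = ContinuousLinearMap.id ℝ (EE n) :=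
        h1.unique (hasFDerivAt_id z)
      calc A t (K v) = ((A t).comp K) v := rfl
        _ = v := by rw [h3]; rfl
    have hXA : ∀ b, fderiv ℝ X z (A t b) = B b := by
      intro b
      have h1 : HasFDerivAt (X ∘ f t) ((fderiv ℝ X z).comp (A t)) ζ := by
        refine HasFDerivAt.comp ζ ?_ (hAs t)
        rw [hfζ]; exact (hXd z).hasFDerivAt
      have h2 : X ∘ f t = f' t := funext hXf
      rw [h2] at h1
      have h3 : HasFDerivAt (f' t) B ζ := Bmap_hasFDerivAt hf'C t ζ
      have h4 : (fderiv ℝ X z).comp (A t) = B := h1.unique h3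
      calc fderiv ℝ X z (A t b) = ((fderiv ℝ X z).comp (A t)) b := rfl
        _ = B b := by rw [h4]
    have hconst : ∀ a b : EE n, ⟪A t a, JL n (B b)⟫ + ⟪B a, JL n (A t b)⟫ = 0 := by
      intro a b
      have hq : (fun s => ⟪A s a, JL n (A s b)⟫) = fun _ : ℝ => ⟪a, JL n b⟫ :=
        funext fun s => symp_const' n (Df s ζ) (hDfsymp s ζ) a b
      have hd : HasDerivAt (fun s => ⟪A s a, JL n (A s b)⟫)
          (⟪A t a, JL n (B b)⟫ + ⟪B a, JL n (A t b)⟫) t := by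
        have d2 : HasDerivAt (fun s => JL n (A s b)) (JL n (B b)) t :=
          (JL n).hasFDerivAt.comp_hasDerivAt t (hmix b)
        exact (hmix a).inner ℝ d2
      rw [hq] at hd
      exact hd.unique (hasDerivAt_const t _)
    have key : ∀ a b : EE n, ⟪A t a, JL n (B b)⟫ = ⟪A t b, JL n (B a)⟫ := by
      intro a b
      have h1 := hconst a b
      have h2 : ⟪B a, JL n (A t b)⟫ = -⟪A t b, JL n (B a)⟫ := by
        rw [real_inner_comm, Janti']
      rw [h2] at h1
      linarith
    have e1 : v₁ = A t (K v₁) := (hAK v₁).symm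
    have e2 : v₂ = A t (K v₂) := (hAK v₂).symm
    rw [e1, e2, hXA, hXA]
    exact key (K v₁) (K v₂)
  -- the field Y = J X and its derivative symmetry
  have hYC : ContDiff ℝ 1 (fun z => JL n (X z)) := (JL n).contDiff.comp hXC
  set Y : EE n → EE n := fun z => JL n (X z) with hYdef
  have hYd : Differentiable ℝ Y := hYC.differentiable one_ne_zero
  have hYcont : Continuous Y := hYC.continuous
  have hDYcont : Continuous (fderiv ℝ Y) := hYC.continuous_fderiv one_ne_zero
  have hDY : ∀ z, fderiv ℝ Y z = (JL n).comp (fderiv ℝ X z) := by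
    intro z
    have : HasFDerivAt Y ((JL n).comp (fderiv ℝ X z)) z :=
      (JL n).hasFDerivAt.comp z (hXd z).hasFDerivAt
    exact this.fderiv
  have hsymY : ∀ z (v₁ v₂ : EE n), ⟪v₁, fderiv ℝ Y z v₂⟫ = ⟪v₂, fderiv ℝ Y z v₁⟫ := by
    intro z v₁ v₂
    rw [hDY]
    exact hsym z v₁ v₂
  set w := f t z₀ with hwdef
  -- rewrite H
  have hHfun : (fun z => H z t) = fun z => -∫ u in (0:ℝ)..1, ⟪z, Y (u • z)⟫ := by
    funext z
    rw [hH z t]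
    congr 1
    exact intervalIntegral.integral_congr fun u _ => (inner_eq_dot' n z (Y (u • z))).symm
  -- the fderiv of the parametrized integrand
  set G' : EE n → ℝ → (EE n →L[ℝ] ℝ) := fun z u =>
    innerSL ℝ (Y (u • z)) + u • ((innerSL ℝ z).comp (fderiv ℝ Y (u • z))) with hG'def
  have hGd : ∀ (u : ℝ) (z : EE n), HasFDerivAt (fun z => ⟪z, Y (u • z)⟫) (G' z u) z := by
    intro u z
    have h2 : HasFDerivAt (fun z : EE n => Y (u • z))
        ((fderiv ℝ Y (u • z)).comp (u • ContinuousLinearMap.id ℝ (EE n))) z :=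
      (hYd (u • z)).hasFDerivAt.comp z (u • ContinuousLinearMap.id ℝ (EE n)).hasFDerivAt
    have h3 := (hasFDerivAt_id z).inner ℝ h2
    refine h3.congr_fderiv ?_
    ext v
    simp only [hG'def, ContinuousLinearMap.comp_apply, ContinuousLinearMap.add_apply,
      ContinuousLinearMap.smul_apply, ContinuousLinearMap.coe_id', id_eq,
      fderivInnerCLM_apply, ContinuousLinearMap.prod_apply, innerSL_apply_apply,
      ContinuousLinearMap.coe_smul', Pi.smul_apply]
    rw [ContinuousLinearMap.map_smul, real_inner_smul_right, real_inner_comm (Y (u • z)) v,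
      smul_eq_mul]
    ring
  have hG'cont : Continuous fun p : EE n × ℝ => G' p.1 p.2 := by
    refine Continuous.add ?_ ?_
    · exact (innerSL ℝ).continuous.comp (hYcont.comp (continuous_snd.smul continuous_fst))
    · exact continuous_snd.smul
        (Continuous.clm_comp ((innerSL ℝ).continuous.comp continuous_fst)
          (hDYcont.comp (continuous_snd.smul continuous_fst)))
  have hGcont : Continuous fun p : EE n × ℝ => ⟪p.1, Y (p.2 • p.1)⟫ := by
    exact continuous_fst.inner (hYcont.comp (continuous_snd.smul continuous_fst))
  have hGcontz : ∀ z : EE n, Continuous fun u : ℝ => ⟪z, Y (u • z)⟫ := fun z =>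
    continuous_const.inner (hYcont.comp (continuous_id.smul continuous_const))
  have hG'contw : Continuous fun u : ℝ => G' w u := by
    simp only [hG'def]
    refine Continuous.add ?_ ?_
    · exact (innerSL ℝ).continuous.comp (hYcont.comp (continuous_id.smul continuous_const))
    · exact continuous_id.smul
        (Continuous.clm_comp continuous_const (hDYcont.comp (continuous_id.smul continuous_const)))
  -- differentiate under the integral sign
  have hint : HasFDerivAt (fun z => ∫ u in (0:ℝ)..1, ⟪z, Y (u • z)⟫)
      (∫ u in (0:ℝ)..1, G' w u) w := by
    obtain ⟨C, hC⟩ : ∃ C, ∀ p ∈ Metric.closedBall w 1 ×ˢ Set.uIcc (0:ℝ) 1,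
        ‖G' p.1 p.2‖ ≤ C :=
      ((isCompact_closedBall w 1).prod isCompact_uIcc).exists_bound_of_continuousOn
        hG'cont.continuousOn
    refine intervalIntegral.hasFDerivAt_integral_of_dominated_of_fderiv_le
      (𝕜 := ℝ) (μ := MeasureTheory.volume) (F := fun z u => ⟪z, Y (u • z)⟫)
      (F' := fun z u => G' z u) (bound := fun _ => C) (s := Metric.ball w 1) (Metric.ball_mem_nhds w one_pos) ?_ ?_ ?_ ?_ ?_ ?_
    · exact Filter.Eventually.of_forall fun z => (hGcontz z).aestronglyMeasurable
    · exact (hGcontz w).intervalIntegrable 0 1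
    · exact hG'contw.aestronglyMeasurable
    · refine Filter.Eventually.of_forall fun u hu z hz => hC (z, u) ?_
      exact ⟨Metric.ball_subset_closedBall hz, Set.uIoc_subset_uIcc hu⟩
    · exact intervalIntegrable_const
    · exact Filter.Eventually.of_forall fun u _ z _ => hGd u z
  -- identify the integral of the derivative
  have hid : (∫ u in (0:ℝ)..1, G' w u) = innerSL ℝ (Y w) := by
    ext v
    rw [ContinuousLinearMap.intervalIntegral_apply (hG'contw.intervalIntegrable 0 1) v]
    have hφ : ∀ u ∈ Set.uIcc (0:ℝ) 1,
        HasDerivAt (fun u : ℝ => u * ⟪v, Y (u • w)⟫) (G' w u v) u := by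
      intro u _
      have hs : HasDerivAt (fun u : ℝ => u • w) w u := by
        simpa using (hasDerivAt_id u).smul_const w
      have hYu : HasDerivAt (fun u : ℝ => Y (u • w)) (fderiv ℝ Y (u • w) w) u :=
        (hYd (u • w)).hasFDerivAt.comp_hasDerivAt (l := Y) (f := fun u : ℝ => u • w) u hs
      have hin : HasDerivAt (fun u : ℝ => ⟪v, Y (u • w)⟫)
          ⟪v, fderiv ℝ Y (u • w) w⟫ u := by
        have := (innerSL ℝ v).hasFDerivAt.comp_hasDerivAt u hYu
        exact this
      have hmul := (hasDerivAt_id' (x := u)).mul hin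
      have heq : G' w u v = 1 * ⟪v, Y (u • w)⟫ + u * ⟪v, fderiv ℝ Y (u • w) w⟫ := by
        simp only [hG'def, ContinuousLinearMap.add_apply, innerSL_apply_apply,
          ContinuousLinearMap.smul_apply, ContinuousLinearMap.comp_apply, smul_eq_mul]
        rw [real_inner_comm (Y (u • w)) v, hsymY (u • w) w v]
        ring
      rw [heq]
      exact hmul
    have hGvcont : Continuous fun u : ℝ => G' w u v :=
      hG'contw.clm_apply continuous_const
    have := intervalIntegral.integral_eq_sub_of_hasDerivAt hφ
      (hGvcont.intervalIntegrable 0 1)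
    rw [this]
    simp only [one_smul, zero_smul, one_mul, zero_mul, sub_zero, innerSL_apply_apply]
    exact real_inner_comm (Y w) v
  rw [hid] at hint
  -- gradient of H(·, t)
  have hHd : HasFDerivAt (fun z => H z t) (innerSL ℝ (-(Y w))) w := by
    rw [hHfun]
    have := hint.neg
    refine this.congr_fderiv ?_
    ext v
    simp [innerSL_apply_apply, inner_neg_neg]
  have hgrad : HasGradientAt (fun z => H z t) (-(Y w)) w := by
    rw [hasGradientAt_iff_hasFDerivAt]
    refine hHd.congr_fderiv ?_
    ext v
    simp [InnerProductSpace.toDual_apply_apply, innerSL_apply_apply]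
  have hgeq : gradient (fun z => H z t) w = -(Y w) := hgrad.gradient
  have final : toEE n (Jmat n *ᵥ fromEE n (gradient (fun z => H z t) (f t z₀))) = f' t z₀ := by
    rw [← hwdef, hgeq]
    rw [← JL_apply' n (-(Y w)), map_neg]
    have h2 : JL n (Y w) = -(X w) := by rw [hYdef]; exact JLJL' n (X w)
    rw [h2, neg_neg, hwdef]
    exact hXf z₀
  rw [final]
  exact hf' t z₀
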